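/- Positive semidefinite matrix completion for chordal graphs: let G be a chordal simple graph on the vertex set {1, ..., n} and let A be a real symmetric n×n matrix (a partial matrix whose specified entries are the diagonal entries and the entries indexed by edges of G). Suppose that for every clique K of G, the principal submatrix of A with rows and columns indexed by K is positive semidefinite. Then there exists a positive semidefinite real n×n matrix B with B_{ii} = A_{ii} for all i and B_{ij} = A_{ij} whenever {i,j} is an edge of G; moreover B can be chosen with rank at most ω(G), the clique number of G. -/

import Mathlib

/-- A simple graph is chordal if every cycle of length at least 4 has a chord: an edge
of the graph joining two vertices of the cycle that is not an edge of the cycle. -/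
def SimpleGraph.IsChordalGraph {V : Type*} (G : SimpleGraph V) : Prop :=
  ∀ ⦃v : V⦄ (c : G.Walk v v), c.IsCycle → 4 ≤ c.length →
    ∃ x ∈ c.support, ∃ y ∈ c.support, G.Adj x y ∧ s(x, y) ∉ c.edges

set_option linter.unusedSectionVars false
set_option linter.unusedVariables false
set_option maxHeartbeats 1000000

open scoped RealInnerProductSpace Matrix

section GramIsometry


variable {ι : Type*} [Fintype ι] {d : ℕ}

local notation "E" d => EuclideanSpace ℝ (Fin d)

lemma gram_expand (u w : ι → EuclideanSpace ℝ (Fin d)) (c e : ι → ℝ) :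
    ⟪∑ i, c i • u i, ∑ j, e j • w j⟫ = ∑ i, ∑ j, c i * e j * ⟪u i, w j⟫ := by
  rw [sum_inner]
  refine Finset.sum_congr rfl fun i _ => ?_
  rw [inner_sum]
  refine Finset.sum_congr rfl fun j _ => ?_
  rw [real_inner_smul_left, real_inner_smul_right]; ring

lemma exists_isometry_of_gram_eq (u w : ι → EuclideanSpace ℝ (Fin d))
    (h : ∀ i j, ⟪u i, u j⟫ = ⟪w i, w j⟫) :
    ∃ T : EuclideanSpace ℝ (Fin d) →ₗᵢ[ℝ] EuclideanSpace ℝ (Fin d), ∀ i, T (u i) = w i := by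
  classical
  set φu : (ι → ℝ) →ₗ[ℝ] EuclideanSpace ℝ (Fin d) := Fintype.linearCombination ℝ u with hφu
  set φw : (ι → ℝ) →ₗ[ℝ] EuclideanSpace ℝ (Fin d) := Fintype.linearCombination ℝ w with hφw
  have key : ∀ c e : ι → ℝ, ⟪φu c, φu e⟫ = ⟪φw c, φw e⟫ := by
    intro c e
    rw [hφu, hφw, Fintype.linearCombination_apply, Fintype.linearCombination_apply,
      Fintype.linearCombination_apply, Fintype.linearCombination_apply,
      gram_expand, gram_expand]
    exact Finset.sum_congr rfl fun i _ => Finset.sum_congr rfl fun j _ => by rw [h i j]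
  have hker : LinearMap.ker φu ≤ LinearMap.ker φw := by
    intro c hc
    rw [LinearMap.mem_ker] at hc ⊢
    have : ⟪φw c, φw c⟫ = 0 := by rw [← key]; rw [hc]; simp
    exact inner_self_eq_zero.mp this
  let ψ : ((ι → ℝ) ⧸ LinearMap.ker φu) →ₗ[ℝ] EuclideanSpace ℝ (Fin d) :=
    (LinearMap.ker φu).liftQ φw hker
  let L0 : LinearMap.range φu →ₗ[ℝ] EuclideanSpace ℝ (Fin d) :=
    ψ ∘ₗ φu.quotKerEquivRange.symm.toLinearMap
  have hL0 : ∀ c : ι → ℝ, L0 ⟨φu c, LinearMap.mem_range_self _ c⟩ = φw c := by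
    intro c
    have : φu.quotKerEquivRange.symm ⟨φu c, LinearMap.mem_range_self _ c⟩ =
        (LinearMap.ker φu).mkQ c := LinearMap.quotKerEquivRange_symm_apply_image _ c _
    simp only [L0, LinearMap.comp_apply, LinearEquiv.coe_toLinearMap, this]
    simp [ψ]
  have hnorm : ∀ x : LinearMap.range φu, ‖L0 x‖ = ‖(x : EuclideanSpace ℝ (Fin d))‖ := by
    rintro ⟨x, c, rfl⟩
    rw [hL0 c]
    show ‖φw c‖ = ‖φu c‖
    rw [norm_eq_sqrt_real_inner, norm_eq_sqrt_real_inner, key c c]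
  let L : LinearMap.range φu →ₗᵢ[ℝ] EuclideanSpace ℝ (Fin d) := ⟨L0, hnorm⟩
  refine ⟨L.extend, fun i => ?_⟩
  have hui : u i = φu (Pi.single i 1) := by
    simp [hφu, Fintype.linearCombination_apply, Pi.single_apply]
  have hmem : u i ∈ LinearMap.range φu := ⟨Pi.single i 1, hui.symm⟩
  have := LinearIsometry.extend_apply L ⟨u i, hmem⟩
  rw [this]
  show L0 ⟨u i, hmem⟩ = w i
  have : (⟨u i, hmem⟩ : LinearMap.range φu) = ⟨φu (Pi.single i 1), LinearMap.mem_range_self _ _⟩ := by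
    exact Subtype.ext hui
  rw [this, hL0]
  simp [hφw, Fintype.linearCombination_apply, Pi.single_apply]
end GramIsometry

lemma exists_gram_vectors {m : Type*} [Fintype m] [DecidableEq m] {d : ℕ}
    (hcard : Fintype.card m ≤ d) {M : Matrix m m ℝ} (hM : M.PosSemidef) :
    ∃ g : m → EuclideanSpace ℝ (Fin d), ∀ k l, ⟪g k, g l⟫ = M k l := by
  classical
  obtain ⟨C, hC⟩ : ∃ C : Matrix m m ℝ, M = Cᴴ * C := by
    open scoped MatrixOrder in
    obtain ⟨X, hX, -, hXM⟩ := CFC.exists_sqrt_of_isSelfAdjoint_of_quasispectrumRestricts hM.isHermitian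
      (QuasispectrumRestricts.nnreal_of_nonneg hM.nonneg)
    exact ⟨X, by rw [← hXM, ← Matrix.star_eq_conjTranspose, hX.star_eq]⟩
  obtain ⟨ρ⟩ : Nonempty (m ↪ Fin d) := by
    rw [Function.Embedding.nonempty_iff_card_le]
    simpa using hcard
  let P : Matrix (Fin d) m ℝ := fun t a => if ρ a = t then 1 else 0
  have hP : Pᵀ * P = 1 := by
    ext a b
    simp only [Matrix.mul_apply, Matrix.transpose_apply]
    simp only [P]
    rcases eq_or_ne a b with rfl | hab
    · simp [Matrix.one_apply]
    · rw [Matrix.one_apply_ne hab, Finset.sum_eq_zero]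
      intro t _
      rcases eq_or_ne (ρ a) t with rfl | h
      · rw [if_neg (fun h' : ρ b = ρ a => hab (ρ.injective h').symm), mul_zero]
      · rw [if_neg h, zero_mul]
  let D := P * C
  refine ⟨fun k => WithLp.toLp 2 (fun t => D t k), fun k l => ?_⟩
  have : (Dᵀ * D) k l = M k l := by
    have : Dᵀ * D = Cᵀ * (Pᵀ * P) * C := by
      simp only [D, Matrix.transpose_mul, Matrix.mul_assoc]
    rw [this, hP, Matrix.mul_one, hC]
    rfl
  rw [← this, PiLp.inner_apply]
  simp [Matrix.mul_apply, Matrix.transpose_apply, mul_comm]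
section Dirac

variable {V : Type*} [DecidableEq V] {G : SimpleGraph V}

open SimpleGraph

lemma takeUntil_cons_ne {v c z u : V} (r : G.Adj v c) (q : G.Walk c z)
    (h : u ∈ (Walk.cons r q).support) (hvu : v ≠ u) (hq : u ∈ q.support) :
    (Walk.cons r q).takeUntil u h = Walk.cons r (q.takeUntil u hq) := by
  simp [Walk.takeUntil, hvu]

lemma mem_takeUntil_or {v z u w : V} (p : G.Walk v z)
    (hu : u ∈ p.support) (hw : w ∈ p.support) :
    u ∈ (p.takeUntil w hw).support ∨ w ∈ (p.takeUntil u hu).support := by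
  induction p with
  | nil =>
    rw [Walk.mem_support_nil_iff] at hu
    subst hu
    exact Or.inl (Walk.start_mem_support _)
  | @cons a c z r q ih =>
    rcases eq_or_ne a u with rfl | hau
    · exact Or.inl (Walk.start_mem_support _)
    rcases eq_or_ne a w with rfl | haw
    · exact Or.inr (Walk.start_mem_support _)
    have hu' : u ∈ q.support := by
      have := hu; rw [Walk.support_cons] at this
      rcases List.mem_cons.mp this with h | h
      · exact absurd h.symm hau
      · exact h
    have hw' : w ∈ q.support := by
      have := hw; rw [Walk.support_cons] at this
      rcases List.mem_cons.mp this with h | h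
      · exact absurd h.symm haw
      · exact h
    rw [takeUntil_cons_ne r q hu hau hu', takeUntil_cons_ne r q hw haw hw']
    rcases ih hu' hw' with h | h
    · exact Or.inl (by simp [Walk.support_cons, h])
    · exact Or.inr (by simp [Walk.support_cons, h])

/-- Reachability via a walk whose support stays inside `t`. -/
def ReachIn (G : SimpleGraph V) (t : Finset V) (a b : V) : Prop :=
  ∃ p : G.Walk a b, ∀ x ∈ p.support, x ∈ t

lemma ReachIn.refl {t : Finset V} {a : V} (ha : a ∈ t) : ReachIn G t a a :=
  ⟨Walk.nil, by simp [ha]⟩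

lemma ReachIn.symm {t : Finset V} {a b : V} (h : ReachIn G t a b) : ReachIn G t b a := by
  obtain ⟨p, hp⟩ := h
  exact ⟨p.reverse, by simp only [Walk.support_reverse, List.mem_reverse]; exact hp⟩

lemma ReachIn.trans {t : Finset V} {a b c : V} (h : ReachIn G t a b) (h' : ReachIn G t b c) :
    ReachIn G t a c := by
  obtain ⟨p, hp⟩ := h
  obtain ⟨q, hq⟩ := h'
  refine ⟨p.append q, fun x hx => ?_⟩
  rw [Walk.mem_support_append_iff] at hx
  exact hx.elim (hp x) (hq x)

lemma ReachIn.adj {t : Finset V} {a b : V} (h : G.Adj a b) (ha : a ∈ t) (hb : b ∈ t) :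
    ReachIn G t a b :=
  ⟨Walk.cons h Walk.nil, by simp [ha, hb]⟩

lemma ReachIn.mem_left {t : Finset V} {a b : V} (h : ReachIn G t a b) : a ∈ t := by
  obtain ⟨p, hp⟩ := h; exact hp a p.start_mem_support

lemma ReachIn.mem_right {t : Finset V} {a b : V} (h : ReachIn G t a b) : b ∈ t := by
  obtain ⟨p, hp⟩ := h; exact hp b p.end_mem_support

lemma not_reachIn_pair {a b : V} (hab : a ≠ b) (hnadj : ¬G.Adj a b) :
    ¬ReachIn G {a, b} a b := by
  rintro ⟨p, hp⟩
  cases p with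
  | nil => exact hab rfl
  | @cons _ c _ h q =>
    have hc : c ∈ ({a, b} : Finset V) := hp c (by simp [Walk.support_cons])
    rcases Finset.mem_insert.mp hc with rfl | hcb
    · exact G.irrefl h
    · rw [Finset.mem_singleton] at hcb
      subst hcb
      exact hnadj h

lemma edge_mem_of_length_one {u w : V} (d : G.Walk u w) (hd : d.length = 1) :
    s(u, w) ∈ d.edges := by
  cases d with
  | nil => simp at hd
  | @cons _ c _ h q =>
    have : q.length = 0 := by simpa [Walk.length_cons] using hd
    have := q.eq_of_length_eq_zero this
    subst this
    simp

lemma no_chord_aux {x y : V} {ok : V → Prop} (p : G.Walk x y)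
    (hgood : ∀ z ∈ p.support, ok z)
    (hmin : ∀ q : G.Walk x y, (∀ z ∈ q.support, ok z) → p.length ≤ q.length)
    {u w : V} (hw : w ∈ p.support) (huw : G.Adj u w) (hne : s(u, w) ∉ p.edges)
    (h : u ∈ (p.takeUntil w hw).support) : False := by
  set t := p.takeUntil w hw with ht
  set d := t.dropUntil u h with hd
  match hl : d.length with
  | 0 =>
    have : u = w := d.eq_of_length_eq_zero hl
    subst this
    exact G.irrefl huw
  | 1 =>
    exact hne (Walk.edges_takeUntil_subset p hw
      (Walk.edges_dropUntil_subset t h (edge_mem_of_length_one d hl)))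
  | (k + 2) =>
    set p' : G.Walk x y := (t.takeUntil u h).append (Walk.cons huw (p.dropUntil w hw)) with hp'
    have hgood' : ∀ z ∈ p'.support, ok z := by
      intro z hz
      rw [hp', Walk.mem_support_append_iff] at hz
      rcases hz with hz | hz
      · exact hgood z (Walk.support_takeUntil_subset p hw (Walk.support_takeUntil_subset t h hz))
      · rw [Walk.support_cons] at hz
        rcases List.mem_cons.mp hz with rfl | hz
        · exact hgood z (Walk.support_takeUntil_subset p hw h)
        · exact hgood z (Walk.support_dropUntil_subset p hw hz)
    have hlen1 : p.length = t.length + (p.dropUntil w hw).length := by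
      conv_lhs => rw [← p.take_spec hw]
      rw [Walk.length_append]
    have hlen2 : t.length = (t.takeUntil u h).length + d.length := by
      conv_lhs => rw [← t.take_spec h]
      rw [Walk.length_append]
    have hlen3 : p'.length = (t.takeUntil u h).length + (1 + (p.dropUntil w hw).length) := by
      rw [hp', Walk.length_append, Walk.length_cons]
      omega
    have := hmin p' hgood'
    omega

lemma no_chord {x y : V} {ok : V → Prop} (p : G.Walk x y)
    (hgood : ∀ z ∈ p.support, ok z)
    (hmin : ∀ q : G.Walk x y, (∀ z ∈ q.support, ok z) → p.length ≤ q.length)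
    {u w : V} (hu : u ∈ p.support) (hw : w ∈ p.support) (huw : G.Adj u w) :
    s(u, w) ∈ p.edges := by
  by_contra hne
  rcases mem_takeUntil_or p hu hw with h | h
  · exact no_chord_aux p hgood hmin hw huw hne h
  · exact no_chord_aux p hgood hmin hu huw.symm (by rwa [Sym2.eq_swap]) h

lemma reachIn_of_mem_support {t : Finset V} {a c : V} (p : G.Walk a c)
    (h : ∀ z ∈ p.support, z ∈ t) {z : V} (hz : z ∈ p.support) : ReachIn G t a z :=
  ⟨p.takeUntil z hz, fun x hx => h x (Walk.support_takeUntil_subset p hz hx)⟩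

lemma exists_adj_reach {t : Finset V} {a b x : V} (hxa : x ≠ a)
    (p : G.Walk a b) (hsupp : ∀ z ∈ p.support, z = x ∨ z ∈ t)
    (hx : x ∈ p.support) :
    ∃ z, G.Adj x z ∧ ReachIn G t a z := by
  set q := p.takeUntil x hx with hq
  have hqnil : ¬q.reverse.Nil := Walk.not_nil_of_ne hxa
  obtain ⟨z, hadj, r, hqr⟩ := Walk.not_nil_iff.mp hqnil
  have hxq : q.support.count x = 1 := p.count_support_takeUntil_eq_one hx
  have hxr : x ∉ r.support := by
    intro hmem
    have : q.reverse.support.count x ≥ 2 := by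
      rw [hqr, Walk.support_cons, List.count_cons_self]
      have := List.count_pos_iff.mpr hmem
      omega
    rw [Walk.support_reverse, List.count_reverse, hxq] at this
    omega
  have hrsupp : ∀ z' ∈ r.support, z' ∈ t := by
    intro z' hz'
    have hz'q : z' ∈ q.support := by
      rw [← List.mem_reverse, ← Walk.support_reverse, hqr, Walk.support_cons]
      exact List.mem_cons_of_mem _ hz'
    rcases hsupp z' (Walk.support_takeUntil_subset p hx hz'q) with rfl | h
    · exact absurd hz' hxr
    · exact h
  exact ⟨z, hadj, ⟨r.reverse, by
    intro y hy
    rw [Walk.support_reverse, List.mem_reverse] at hy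
    exact hrsupp y hy⟩⟩

lemma exists_min_walk {x y : V} (ok : V → Prop)
    (hex : ∃ p : G.Walk x y, ∀ z ∈ p.support, ok z) :
    ∃ p : G.Walk x y, p.IsPath ∧ (∀ z ∈ p.support, ok z) ∧
      ∀ q : G.Walk x y, (∀ z ∈ q.support, ok z) → p.length ≤ q.length := by
  set S : Set ℕ := {l | ∃ p : G.Walk x y, (∀ z ∈ p.support, ok z) ∧ p.length = l} with hS
  have hSne : S.Nonempty := by
    obtain ⟨p, hp⟩ := hex
    exact ⟨p.length, p, hp, rfl⟩
  obtain ⟨p, hp, hplen⟩ := Nat.sInf_mem hSne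
  have hmin : ∀ q : G.Walk x y, (∀ z ∈ q.support, ok z) → sInf S ≤ q.length := by
    intro q hq
    exact Nat.sInf_le ⟨q, hq, rfl⟩
  have hbgood : ∀ z ∈ p.bypass.support, ok z := fun z hz => hp z (p.support_bypass_subset hz)
  have hble : p.bypass.length = sInf S := by
    have h1 := p.length_bypass_le
    have h2 := hmin p.bypass hbgood
    omega
  exact ⟨p.bypass, p.bypass_isPath, hbgood, fun q hq => by rw [hble]; exact hmin q hq⟩

lemma length_two_le {x y : V} (hxy : x ≠ y) (hnadj : ¬G.Adj x y) (p : G.Walk x y) :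
    2 ≤ p.length := by
  rcases Nat.lt_or_ge p.length 2 with h | h
  · interval_cases hl : p.length
    · exact absurd (p.eq_of_length_eq_zero hl) hxy
    · exact absurd (p.adj_of_mem_edges (edge_mem_of_length_one p hl)) hnadj
  · exact h

lemma chordal_no_sep_pair (hch : G.IsChordalGraph) {x y : V} (hxy : x ≠ y)
    (hnadj : ¬G.Adj x y) {Ca Cb : Finset V}
    (hdisj : ∀ z, z ∈ Ca → z ∈ Cb → False)
    (hnoadj : ∀ c ∈ Ca, ∀ d ∈ Cb, ¬G.Adj c d)
    (hexa : ∃ p : G.Walk x y, ∀ z ∈ p.support, z = x ∨ z = y ∨ z ∈ Ca)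
    (hexb : ∃ p : G.Walk x y, ∀ z ∈ p.support, z = x ∨ z = y ∨ z ∈ Cb) :
    False := by
  obtain ⟨Pa, hPa_path, hPa_good, hPa_min⟩ := exists_min_walk _ hexa
  obtain ⟨Pb, hPb_path, hPb_good, hPb_min⟩ := exists_min_walk _ hexb
  have hla : 2 ≤ Pa.length := length_two_le hxy hnadj Pa
  have hlb : 2 ≤ Pb.length := length_two_le hxy hnadj Pb
  set C : G.Walk x x := Pa.append Pb.reverse with hC
  have hClen : C.length = Pa.length + Pb.length := by
    rw [hC, Walk.length_append, Walk.length_reverse]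
  -- membership
  have hmemC : ∀ z, z ∈ C.support ↔ z ∈ Pa.support ∨ z ∈ Pb.support := by
    intro z
    rw [hC, Walk.mem_support_append_iff, Walk.support_reverse, List.mem_reverse]
  have hmemE : ∀ e, e ∈ C.edges ↔ e ∈ Pa.edges ∨ e ∈ Pb.edges := by
    intro e
    rw [hC, Walk.edges_append, List.mem_append, Walk.edges_reverse, List.mem_reverse]
  -- nodup of supports
  have hPa_nodup := (Walk.isPath_def _).mp hPa_path
  have hPb_rev_nodup := (Walk.isPath_def _).mp hPb_path.reverse
  have hxa_tail : x ∉ Pa.support.tail := by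
    have := hPa_nodup
    rw [Pa.support_eq_cons] at this
    exact (List.nodup_cons.mp this).1
  have hyb_tail : y ∉ Pb.reverse.support.tail := by
    have := hPb_rev_nodup
    rw [Pb.reverse.support_eq_cons] at this
    exact (List.nodup_cons.mp this).1
  have hints : ∀ z, z ∈ Pa.support → z ∈ Pb.support → z = x ∨ z = y := by
    intro z h1 h2
    rcases hPa_good z h1 with rfl | rfl | hza
    · exact Or.inl rfl
    · exact Or.inr rfl
    rcases hPb_good z h2 with rfl | rfl | hzb
    · exact Or.inl rfl
    · exact Or.inr rfl
    exact absurd (hdisj z hza hzb) id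
  have hcycle : C.IsCycle := by
    rw [Walk.isCycle_def]
    refine ⟨?_, ?_, ?_⟩
    · -- IsTrail
      rw [Walk.isTrail_def, hC, Walk.edges_append, List.nodup_append]
      refine ⟨hPa_path.isTrail.edges_nodup, hPb_path.reverse.isTrail.edges_nodup, ?_⟩
      intro e he1 e' he2 hee
      subst hee
      rw [Walk.edges_reverse, List.mem_reverse] at he2
      induction e with
      | h c d =>
        have hcd : G.Adj c d := Pa.adj_of_mem_edges he1
        have hc1 := Pa.fst_mem_support_of_mem_edges he1
        have hd1 := Pa.snd_mem_support_of_mem_edges he1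
        have hc2 := Pb.fst_mem_support_of_mem_edges he2
        have hd2 := Pb.snd_mem_support_of_mem_edges he2
        rcases hints c hc1 hc2 with rfl | rfl <;> rcases hints d hd1 hd2 with rfl | rfl
        · exact G.irrefl hcd
        · exact hnadj hcd
        · exact hnadj hcd.symm
        · exact G.irrefl hcd
    · -- ≠ nil
      intro h
      rw [h] at hClen
      simp only [Walk.length_nil] at hClen
      omega
    · -- tail nodup
      have htail : C.support.tail = Pa.support.tail ++ Pb.reverse.support.tail := by
        rw [hC, Walk.support_append]
        conv_lhs => rw [Pa.support_eq_cons]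
        rfl
      rw [htail, List.nodup_append]
      refine ⟨hPa_nodup.tail, hPb_rev_nodup.tail, ?_⟩
      intro z hz1 z' hz2 hzz
      subst hzz
      have hz1' : z ∈ Pa.support := List.mem_of_mem_tail hz1
      have hz2' : z ∈ Pb.support := by
        have : z ∈ Pb.reverse.support := List.mem_of_mem_tail hz2
        rwa [Walk.support_reverse, List.mem_reverse] at this
      rcases hints z hz1' hz2' with rfl | rfl
      · exact hxa_tail hz1
      · exact hyb_tail hz2
  obtain ⟨x', hx', y', hy', hadj', hne'⟩ := hch C hcycle (by omega)
  rw [hmemC] at hx' hy'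
  have mixed : ∀ c d : V, G.Adj c d → c ∈ Pa.support → c ∉ Pb.support →
      d ∈ Pb.support → d ∉ Pa.support → False := by
    intro c d hcd hc1 hc2 hd1 hd2
    have hcCa : c ∈ Ca := by
      rcases hPa_good c hc1 with rfl | rfl | h
      · exact absurd Pb.start_mem_support hc2
      · exact absurd Pb.end_mem_support hc2
      · exact h
    have hdCb : d ∈ Cb := by
      rcases hPb_good d hd1 with rfl | rfl | h
      · exact absurd Pa.start_mem_support hd2
      · exact absurd Pa.end_mem_support hd2
      · exact h
    exact hnoadj c hcCa d hdCb hcd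
  have chordA : x' ∈ Pa.support → y' ∈ Pa.support → False := by
    intro h1 h2
    exact hne' ((hmemE _).mpr (Or.inl (no_chord Pa hPa_good hPa_min h1 h2 hadj')))
  have chordB : x' ∈ Pb.support → y' ∈ Pb.support → False := by
    intro h1 h2
    exact hne' ((hmemE _).mpr (Or.inr (no_chord Pb hPb_good hPb_min h1 h2 hadj')))
  rcases hx' with ha1 | hb1 <;> rcases hy' with ha2 | hb2
  · exact chordA ha1 ha2
  · by_cases hx'b : x' ∈ Pb.support
    · exact chordB hx'b hb2
    · by_cases hy'a : y' ∈ Pa.support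
      · exact chordA ha1 hy'a
      · exact mixed x' y' hadj' ha1 hx'b hb2 hy'a
  · by_cases hy'b : y' ∈ Pb.support
    · exact chordB hb1 hy'b
    · by_cases hx'a : x' ∈ Pa.support
      · exact chordA hx'a ha2
      · exact mixed y' x' hadj'.symm ha2 hy'b hb1 hx'a
  · exact chordB hb1 hb2

/-- `v` is simplicial within `s`: its neighbors in `s` are pairwise adjacent. -/
def SimpIn (G : SimpleGraph V) (s : Finset V) (v : V) : Prop :=
  ∀ x ∈ s, ∀ y ∈ s, G.Adj v x → G.Adj v y → x ≠ y → G.Adj x y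

def DiracP (G : SimpleGraph V) (s : Finset V) : Prop :=
  (s.Nonempty → ∃ v ∈ s, SimpIn G s v) ∧
    (∀ a ∈ s, ∀ b ∈ s, a ≠ b → ¬G.Adj a b →
      ∃ v ∈ s, ∃ w ∈ s, SimpIn G s v ∧ SimpIn G s w ∧ v ≠ w ∧ ¬G.Adj v w)

lemma ReachIn.mono {t t' : Finset V} (h : t ⊆ t') {a b : V} (hr : ReachIn G t a b) :
    ReachIn G t' a b := by
  obtain ⟨p, hp⟩ := hr
  exact ⟨p, fun x hx => h (hp x hx)⟩

lemma exists_simp_in_comp {s T Ca : Finset V} {b : V}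
    (IH : ∀ t : Finset V, t ⊂ s → DiracP G t)
    (hCa_sub : Ca ⊆ s) (hT_sub : T ⊆ s) (hCaT : ∀ z ∈ Ca, z ∉ T)
    (hane : Ca.Nonempty)
    (hb : b ∈ s) (hbCa : b ∉ Ca) (hbT : b ∉ T)
    (hTclique : ∀ x ∈ T, ∀ y ∈ T, x ≠ y → G.Adj x y)
    (hclosed : ∀ v ∈ Ca, ∀ w ∈ s, G.Adj v w → w ∉ T → w ∈ Ca) :
    ∃ v ∈ Ca, SimpIn G s v := by
  set sa := Ca ∪ T with hsa
  have hsub : sa ⊆ s.erase b := by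
    intro z hz
    rcases Finset.mem_union.mp hz with h | h
    · exact Finset.mem_erase.mpr ⟨fun h' => hbCa (h' ▸ h), hCa_sub h⟩
    · exact Finset.mem_erase.mpr ⟨fun h' => hbT (h' ▸ h), hT_sub h⟩
  have hss : sa ⊂ s := hsub.trans_ssubset (Finset.erase_ssubset hb)
  obtain ⟨h1, h2⟩ := IH sa hss
  have lift : ∀ v ∈ Ca, SimpIn G sa v → SimpIn G s v := by
    intro v hv hsimp x hx y hy hvx hvy hxy
    have hmem : ∀ w ∈ s, G.Adj v w → w ∈ sa := by
      intro w hw hvw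
      by_cases hwT : w ∈ T
      · exact Finset.mem_union_right _ hwT
      · exact Finset.mem_union_left _ (hclosed v hv w hw hvw hwT)
    exact hsimp x (hmem x hx hvx) y (hmem y hy hvy) hvx hvy hxy
  by_cases hclq : ∀ x ∈ sa, ∀ y ∈ sa, x ≠ y → G.Adj x y
  · obtain ⟨a, ha⟩ := hane
    exact ⟨a, ha, lift a ha (fun x hx y hy _ _ hxy => hclq x hx y hy hxy)⟩
  · push_neg at hclq
    obtain ⟨x, hx, y, hy, hxy, hnadjxy⟩ := hclq
    obtain ⟨v, hv, w, hw, hsv, hsw, hvw, hnvw⟩ := h2 x hx y hy hxy hnadjxy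
    have : v ∈ Ca ∨ w ∈ Ca := by
      by_contra hcon
      push_neg at hcon
      have hvT : v ∈ T := (Finset.mem_union.mp hv).resolve_left hcon.1
      have hwT : w ∈ T := (Finset.mem_union.mp hw).resolve_left hcon.2
      exact hnvw (hTclique v hvT w hwT hvw)
    rcases this with h | h
    · exact ⟨v, h, lift v h hsv⟩
    · exact ⟨w, h, lift w h hsw⟩

lemma dirac_step (hch : G.IsChordalGraph) {s : Finset V} {a b : V}
    (IH : ∀ t : Finset V, t ⊂ s → DiracP G t)
    (ha : a ∈ s) (hb : b ∈ s) (hab : a ≠ b) (hnadj : ¬G.Adj a b) :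
    ∃ v ∈ s, ∃ w ∈ s, SimpIn G s v ∧ SimpIn G s w ∧ v ≠ w ∧ ¬G.Adj v w := by
  classical
  set cand := (s \ {a, b}).powerset.filter (fun T => ¬ ReachIn G (s \ T) a b) with hcand
  have hcand0 : (s \ {a, b}) ∈ cand := by
    rw [hcand, Finset.mem_filter, Finset.mem_powerset]
    refine ⟨le_refl _, fun hr => ?_⟩
    have hsub : s \ (s \ {a, b}) ⊆ {a, b} := by
      intro z hz
      rw [Finset.mem_sdiff, Finset.mem_sdiff] at hz
      push_neg at hz
      exact hz.2 hz.1
    exact not_reachIn_pair hab hnadj (hr.mono hsub)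
  obtain ⟨T, hTmem, hTmin⟩ := Finset.exists_min_image cand Finset.card ⟨_, hcand0⟩
  rw [hcand, Finset.mem_filter, Finset.mem_powerset] at hTmem
  obtain ⟨hTsub, hTsep⟩ := hTmem
  have hTs : T ⊆ s := hTsub.trans (Finset.sdiff_subset)
  have haT : a ∉ T := fun h => by simpa using (Finset.mem_sdiff.mp (hTsub h)).2
  have hbT : b ∉ T := fun h => by simpa using (Finset.mem_sdiff.mp (hTsub h)).2
  set Ca := (s \ T).filter (fun c => ReachIn G (s \ T) a c) with hCa
  set Cb := (s \ T).filter (fun c => ReachIn G (s \ T) b c) with hCb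
  have haCa : a ∈ Ca := by
    rw [hCa, Finset.mem_filter]
    have : a ∈ s \ T := Finset.mem_sdiff.mpr ⟨ha, haT⟩
    exact ⟨this, ReachIn.refl this⟩
  have hbCb : b ∈ Cb := by
    rw [hCb, Finset.mem_filter]
    have : b ∈ s \ T := Finset.mem_sdiff.mpr ⟨hb, hbT⟩
    exact ⟨this, ReachIn.refl this⟩
  have hCa_sub : Ca ⊆ s \ T := Finset.filter_subset _ _
  have hCb_sub : Cb ⊆ s \ T := Finset.filter_subset _ _
  have hCa_reach : ∀ c ∈ Ca, ReachIn G (s \ T) a c := fun c hc =>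
    (Finset.mem_filter.mp hc).2
  have hCb_reach : ∀ c ∈ Cb, ReachIn G (s \ T) b c := fun c hc =>
    (Finset.mem_filter.mp hc).2
  have hdisj : ∀ z, z ∈ Ca → z ∈ Cb → False := by
    intro z hza hzb
    exact hTsep ((hCa_reach z hza).trans (hCb_reach z hzb).symm)
  have hbCa : b ∉ Ca := fun h => hTsep (hCa_reach b h)
  have haCb : a ∉ Cb := fun h => hTsep ((hCb_reach a h).symm)
  have hnoadj : ∀ c ∈ Ca, ∀ d ∈ Cb, ¬G.Adj c d := by
    intro c hc d hd hcd
    refine hTsep (((hCa_reach c hc).trans ?_).trans (hCb_reach d hd).symm)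
    exact ReachIn.adj hcd (hCa_sub hc) (hCb_sub hd)
  -- every separator vertex has a neighbor in each component
  have hnbr : ∀ x ∈ T, (∃ z ∈ Ca, G.Adj x z) ∧ (∃ z ∈ Cb, G.Adj x z) := by
    intro x hx
    have hxs : x ∈ s := hTs hx
    have hxa : x ≠ a := fun h => haT (h ▸ hx)
    have hxb : x ≠ b := fun h => hbT (h ▸ hx)
    have hcard : (T.erase x).card < T.card := Finset.card_erase_lt_of_mem hx
    have hnotc : T.erase x ∉ cand := by
      intro hmem
      have := hTmin _ hmem
      omega
    have hr : ReachIn G (s \ T.erase x) a b := by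
      by_contra hr
      exact hnotc (by
        rw [hcand, Finset.mem_filter, Finset.mem_powerset]
        exact ⟨(Finset.erase_subset _ _).trans hTsub, hr⟩)
    obtain ⟨p, hp⟩ := hr
    have hxp : x ∈ p.support := by
      by_contra hxp
      refine hTsep ⟨p, fun z hz => ?_⟩
      have := hp z hz
      rw [Finset.mem_sdiff] at this ⊢
      refine ⟨this.1, fun hzT => ?_⟩
      exact this.2 (Finset.mem_erase.mpr ⟨fun h => hxp (h ▸ hz), hzT⟩)
    have hsupp : ∀ z ∈ p.support, z = x ∨ z ∈ s \ T := by
      intro z hz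
      rcases eq_or_ne z x with rfl | hzx
      · exact Or.inl rfl
      · have := hp z hz
        rw [Finset.mem_sdiff] at this ⊢
        exact Or.inr ⟨this.1, fun hzT => this.2 (Finset.mem_erase.mpr ⟨hzx, hzT⟩)⟩
    constructor
    · obtain ⟨z, hadj, hreach⟩ := exists_adj_reach hxa p hsupp hxp
      exact ⟨z, Finset.mem_filter.mpr ⟨hreach.mem_right, hreach⟩, hadj⟩
    · obtain ⟨z, hadj, hreach⟩ := exists_adj_reach hxb p.reverse
        (fun z hz => hsupp z (by rwa [Walk.support_reverse, List.mem_reverse] at hz))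
        (by rwa [Walk.support_reverse, List.mem_reverse])
      exact ⟨z, Finset.mem_filter.mpr ⟨hreach.mem_right, hreach⟩, hadj⟩
  -- connecting walk through a component
  have hconn : ∀ {x y : V} (c d : V), G.Adj x c → G.Adj y d →
      c ∈ Ca → d ∈ Ca →
      ∃ p : G.Walk x y, ∀ z ∈ p.support, z = x ∨ z = y ∨ z ∈ Ca := by
    intro x y c d hxc hyd hcCa hdCa
    obtain ⟨q1, hq1⟩ := hCa_reach c hcCa
    obtain ⟨q2, hq2⟩ := hCa_reach d hdCa
    set r : G.Walk c d := q1.reverse.append q2 with hr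
    have hrCa : ∀ z ∈ r.support, z ∈ Ca := by
      intro z hz
      rw [hr, Walk.mem_support_append_iff] at hz
      rcases hz with hz | hz
      · rw [Walk.support_reverse, List.mem_reverse] at hz
        exact Finset.mem_filter.mpr ⟨hq1 z hz, reachIn_of_mem_support q1 hq1 hz⟩
      · exact Finset.mem_filter.mpr ⟨hq2 z hz, reachIn_of_mem_support q2 hq2 hz⟩
    refine ⟨Walk.cons hxc (r.concat hyd.symm), fun z hz => ?_⟩
    rw [Walk.support_cons] at hz
    rcases List.mem_cons.mp hz with rfl | hz
    · exact Or.inl rfl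
    rw [Walk.support_concat, List.mem_append] at hz
    rcases hz with hz | hz
    · exact Or.inr (Or.inr (hrCa z hz))
    · exact Or.inr (Or.inl (List.mem_singleton.mp hz))
  have hconnB : ∀ {x y : V} (c d : V), G.Adj x c → G.Adj y d →
      c ∈ Cb → d ∈ Cb →
      ∃ p : G.Walk x y, ∀ z ∈ p.support, z = x ∨ z = y ∨ z ∈ Cb := by
    intro x y c d hxc hyd hcCb hdCb
    obtain ⟨q1, hq1⟩ := hCb_reach c hcCb
    obtain ⟨q2, hq2⟩ := hCb_reach d hdCb
    set r : G.Walk c d := q1.reverse.append q2 with hr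
    have hrCb : ∀ z ∈ r.support, z ∈ Cb := by
      intro z hz
      rw [hr, Walk.mem_support_append_iff] at hz
      rcases hz with hz | hz
      · rw [Walk.support_reverse, List.mem_reverse] at hz
        exact Finset.mem_filter.mpr ⟨hq1 z hz, reachIn_of_mem_support q1 hq1 hz⟩
      · exact Finset.mem_filter.mpr ⟨hq2 z hz, reachIn_of_mem_support q2 hq2 hz⟩
    refine ⟨Walk.cons hxc (r.concat hyd.symm), fun z hz => ?_⟩
    rw [Walk.support_cons] at hz
    rcases List.mem_cons.mp hz with rfl | hz
    · exact Or.inl rfl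
    rw [Walk.support_concat, List.mem_append] at hz
    rcases hz with hz | hz
    · exact Or.inr (Or.inr (hrCb z hz))
    · exact Or.inr (Or.inl (List.mem_singleton.mp hz))
  -- T is a clique
  have hTclique : ∀ x ∈ T, ∀ y ∈ T, x ≠ y → G.Adj x y := by
    intro x hx y hy hxy
    by_contra hnxy
    obtain ⟨⟨za, hza, hxza⟩, _⟩ := hnbr x hx
    obtain ⟨⟨wa, hwa, hywa⟩, _⟩ := hnbr y hy
    obtain ⟨_, ⟨zb, hzb, hxzb⟩⟩ := hnbr x hx
    obtain ⟨_, ⟨wb, hwb, hywb⟩⟩ := hnbr y hy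
    obtain ⟨pa, hpa⟩ := hconn za wa hxza hywa hza hwa
    obtain ⟨pb, hpb⟩ := hconnB zb wb hxzb hywb hzb hwb
    exact chordal_no_sep_pair hch hxy hnxy hdisj hnoadj ⟨pa, hpa⟩ ⟨pb, hpb⟩
  -- apply the component lemma on both sides
  have hclosedA : ∀ v ∈ Ca, ∀ w ∈ s, G.Adj v w → w ∉ T → w ∈ Ca := by
    intro v hv w hw hvw hwT
    have hwst : w ∈ s \ T := Finset.mem_sdiff.mpr ⟨hw, hwT⟩
    exact Finset.mem_filter.mpr ⟨hwst,
      (hCa_reach v hv).trans (ReachIn.adj hvw (hCa_sub hv) hwst)⟩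
  have hclosedB : ∀ v ∈ Cb, ∀ w ∈ s, G.Adj v w → w ∉ T → w ∈ Cb := by
    intro v hv w hw hvw hwT
    have hwst : w ∈ s \ T := Finset.mem_sdiff.mpr ⟨hw, hwT⟩
    exact Finset.mem_filter.mpr ⟨hwst,
      (hCb_reach v hv).trans (ReachIn.adj hvw (hCb_sub hv) hwst)⟩
  obtain ⟨va, hvaCa, hva⟩ := exists_simp_in_comp IH (hCa_sub.trans Finset.sdiff_subset) hTs
    (fun z hz => (Finset.mem_sdiff.mp (hCa_sub hz)).2) ⟨a, haCa⟩ hb hbCa hbT hTclique hclosedA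
  obtain ⟨vb, hvbCb, hvb⟩ := exists_simp_in_comp IH (hCb_sub.trans Finset.sdiff_subset) hTs
    (fun z hz => (Finset.mem_sdiff.mp (hCb_sub hz)).2) ⟨b, hbCb⟩ ha haCb haT hTclique hclosedB
  refine ⟨va, (Finset.mem_sdiff.mp (hCa_sub hvaCa)).1, vb,
    (Finset.mem_sdiff.mp (hCb_sub hvbCb)).1, hva, hvb, ?_, hnoadj va hvaCa vb hvbCb⟩
  intro h
  exact hdisj va hvaCa (h ▸ hvbCb)

lemma dirac (hch : G.IsChordalGraph) : ∀ s : Finset V, DiracP G s := by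
  intro s
  induction s using Finset.strongInduction with
  | _ s IH =>
    constructor
    · rintro ⟨a, ha⟩
      by_cases hclq : ∀ x ∈ s, ∀ y ∈ s, x ≠ y → G.Adj x y
      · exact ⟨a, ha, fun x hx y hy _ _ hxy => hclq x hx y hy hxy⟩
      · push_neg at hclq
        obtain ⟨x, hx, y, hy, hxy, hnadjxy⟩ := hclq
        obtain ⟨v, hv, _, _, h1, _, _, _⟩ := dirac_step hch IH hx hy hxy hnadjxy
        exact ⟨v, hv, h1⟩
    · intro a ha b hb hab hnadj
      exact dirac_step hch IH ha hb hab hnadj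

end Dirac



/-- Positive semidefinite matrix completion for chordal graphs (Grone–Johnson–Sá–
Wolkowicz, 'if' direction): if `G` is chordal and every fully specified principal
submatrix (indexed by a clique of `G`) of the partial symmetric matrix `A` is PSD, then
`A` has a PSD completion `B`, which can moreover be chosen of rank at most the clique
number `ω(G)`. -/
theorem psd_completion_of_chordal {n : ℕ} (G : SimpleGraph (Fin n))
    (hchordal : G.IsChordalGraph) (A : Matrix (Fin n) (Fin n) ℝ) (hA : A.IsSymm)
    (hcliques : ∀ K : Finset (Fin n), G.IsClique (K : Set (Fin n)) →
      (A.submatrix (fun i : K => (i : Fin n)) (fun j : K => (j : Fin n))).PosSemidef) :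
    ∃ B : Matrix (Fin n) (Fin n) ℝ, B.PosSemidef ∧
      (∀ i, B i i = A i i) ∧ (∀ i j, G.Adj i j → B i j = A i j) ∧
      B.rank ≤ G.cliqueNum := by
  classical
  set ω := G.cliqueNum with hω
  have main : ∀ N : ℕ, ∀ s : Finset (Fin n), s.card ≤ N →
      ∃ f : Fin n → EuclideanSpace ℝ (Fin ω),
        ∀ i ∈ s, ∀ j ∈ s, (i = j ∨ G.Adj i j) → ⟪f i, f j⟫ = A i j := by
    intro N
    induction N with
    | zero =>
      intro s hs
      have : s = ∅ := Finset.card_eq_zero.mp (Nat.le_zero.mp hs)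
      subst this
      exact ⟨0, fun i hi => absurd hi (Finset.notMem_empty i)⟩
    | succ N ih =>
      intro s hs
      rcases s.eq_empty_or_nonempty with rfl | hne
      · exact ⟨0, fun i hi => absurd hi (Finset.notMem_empty i)⟩
      obtain ⟨first, _⟩ := dirac hchordal s
      obtain ⟨v, hv, hsimp⟩ := first hne
      set s' := s.erase v with hs'
      have hs'sub : s' ⊆ s := Finset.erase_subset _ _
      obtain ⟨f', hf'⟩ := ih s' (by
        have hcd : s'.card = s.card - 1 := by rw [hs']; exact Finset.card_erase_of_mem hv
        omega)
      set K := s'.filter (fun w => G.Adj v w) with hKdef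
      have hKsub : K ⊆ s' := Finset.filter_subset _ _
      have hKadj : ∀ k ∈ K, G.Adj v k := fun k hk => (Finset.mem_filter.mp hk).2
      have hvK : v ∉ K := fun h => Finset.notMem_erase v s (hKsub h)
      set Kv : Finset (Fin n) := insert v K with hKvdef
      have hclK : G.IsClique (Kv : Set (Fin n)) := by
        intro x hx y hy hxy
        rw [Finset.mem_coe, hKvdef, Finset.mem_insert] at hx hy
        rcases hx with rfl | hx
        · rcases hy with rfl | hy
          · exact absurd rfl hxy
          · exact hKadj y hy
        · rcases hy with rfl | hy
          · exact (hKadj x hx).symm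
          · exact hsimp x (hs'sub (hKsub hx)) y (hs'sub (hKsub hy))
              (hKadj x hx) (hKadj y hy) hxy
      have hpsd := hcliques Kv hclK
      have hcard : Fintype.card Kv ≤ ω := by
        rw [Fintype.card_coe]
        exact SimpleGraph.IsClique.card_le_cliqueNum (tc := hclK)
      obtain ⟨g, hg⟩ := exists_gram_vectors hcard hpsd
      have hgA : ∀ k l : Kv, ⟪g k, g l⟫ = A (k : Fin n) (l : Fin n) := by
        intro k l
        rw [hg k l]
        rfl
      set uu : {x // x ∈ K} → EuclideanSpace ℝ (Fin ω) :=
        fun k => g ⟨(k : Fin n), Finset.mem_insert_of_mem k.2⟩ with huu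
      set ww : {x // x ∈ K} → EuclideanSpace ℝ (Fin ω) := fun k => f' (k : Fin n) with hww
      have hAK : ∀ k l : {x // x ∈ K}, (k : Fin n) = (l : Fin n) ∨ G.Adj k l := by
        intro k l
        rcases eq_or_ne (k : Fin n) (l : Fin n) with h | h
        · exact Or.inl h
        · exact Or.inr (hsimp k (hs'sub (hKsub k.2)) l (hs'sub (hKsub l.2))
            (hKadj k k.2) (hKadj l l.2) h)
      have hgram : ∀ k l : {x // x ∈ K}, ⟪uu k, uu l⟫ = ⟪ww k, ww l⟫ := by
        intro k l
        rw [huu, hww]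
        simp only
        rw [hgA ⟨k, _⟩ ⟨l, _⟩, hf' k (hKsub k.2) l (hKsub l.2) (hAK k l)]
      obtain ⟨T, hT⟩ := exists_isometry_of_gram_eq uu ww hgram
      set gv : EuclideanSpace ℝ (Fin ω) := g ⟨v, Finset.mem_insert_self _ _⟩ with hgv
      refine ⟨fun i => if i = v then T gv else f' i, ?_⟩
      intro i hi j hj hij
      by_cases hiv : i = v <;> by_cases hjv : j = v
      · subst hiv; subst hjv
        simp only [eq_self_iff_true, if_true]
        rw [T.inner_map_map, hgv, hgA]
      · subst hiv
        have hadj : G.Adj i j := by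
          rcases hij with h | h
          · exact absurd h.symm hjv
          · exact h
        have hjK : j ∈ K := Finset.mem_filter.mpr ⟨Finset.mem_erase.mpr ⟨hjv, hj⟩, hadj⟩
        simp only [eq_self_iff_true, if_true, if_neg hjv]
        have : f' j = T (uu ⟨j, hjK⟩) := (hT ⟨j, hjK⟩).symm
        rw [this, T.inner_map_map, hgv, huu]
        simp only
        rw [hgA]
      · subst hjv
        have hadj : G.Adj j i := by
          rcases hij with h | h
          · exact absurd h hiv
          · exact h.symm
        have hiK : i ∈ K := Finset.mem_filter.mpr ⟨Finset.mem_erase.mpr ⟨hiv, hi⟩, hadj⟩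
        simp only [eq_self_iff_true, if_true, if_neg hiv]
        have : f' i = T (uu ⟨i, hiK⟩) := (hT ⟨i, hiK⟩).symm
        rw [real_inner_comm, this, T.inner_map_map, hgv, huu]
        simp only
        rw [hgA]
        exact hA.apply i j
      · simp only [if_neg hiv, if_neg hjv]
        exact hf' i (Finset.mem_erase.mpr ⟨hiv, hi⟩) j (Finset.mem_erase.mpr ⟨hjv, hj⟩) hij
  obtain ⟨f, hf⟩ := main (Finset.univ.card) Finset.univ le_rfl
  set Vm : Matrix (Fin ω) (Fin n) ℝ := fun t i => f i t with hVm
  have hentry : ∀ i j, (Vmᴴ * Vm) i j = ⟪f i, f j⟫ := by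
    intro i j
    rw [PiLp.inner_apply]
    simp [Matrix.mul_apply, Matrix.conjTranspose_apply, hVm, RCLike.inner_apply, mul_comm]
    rfl
  refine ⟨Vmᴴ * Vm, Matrix.posSemidef_conjTranspose_mul_self Vm, ?_, ?_, ?_⟩
  · intro i
    rw [hentry i i, hf i (Finset.mem_univ i) i (Finset.mem_univ i) (Or.inl rfl)]
  · intro i j hadj
    rw [hentry i j, hf i (Finset.mem_univ i) j (Finset.mem_univ j) (Or.inr hadj)]
  · rw [Matrix.rank_conjTranspose_mul_self]
    exact Vm.rank_le_card_height.trans (by simp)
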